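/- In the closing-time Brownian model with closing fractions x_1 ≤ ... ≤ x_n in [0,1], the lag-one covariance of closing-time returns satisfies Cov(X^i_{t+1}, X^j_t) = (x_j − x_i)·σ_{ij} if x_j > x_i, and 0 if x_j ≤ x_i; moreover Cov(X^i_{t+k}, X^j_t) = 0 for all k ≥ 2. -/

import Mathlib

open MeasureTheory

/-- Covariance of two real random variables under measure `μ`. -/
noncomputable def cov {Ω : Type} [MeasurableSpace Ω] (μ : Measure Ω) (X Y : Ω → ℝ) : ℝ :=
  ∫ ω, (X ω - ∫ ω', X ω' ∂μ) * (Y ω - ∫ ω', Y ω' ∂μ) ∂μ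

lemma memL2_int_mul {Ω : Type} [MeasurableSpace Ω] {μ : Measure Ω} {f g : Ω → ℝ}
    (hf : MemLp f 2 μ) (hg : MemLp g 2 μ) : Integrable (fun ω => f ω * g ω) μ := by
  have h := L2.integrable_inner (𝕜 := ℝ) (hf.toLp f) (hg.toLp g)
  refine h.congr ?_
  filter_upwards [hf.coeFn_toLp, hg.coeFn_toLp] with ω h1 h2
  simp [h1, h2, RCLike.inner_apply, mul_comm]

lemma centered_int_mul {Ω : Type} [MeasurableSpace Ω] {μ : Measure Ω} [IsProbabilityMeasure μ]
    {f g : Ω → ℝ} (hf : MemLp f 2 μ) (hg : MemLp g 2 μ) :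
    Integrable (fun ω => (f ω - ∫ ω', f ω' ∂μ) * (g ω - ∫ ω', g ω' ∂μ)) μ :=
  memL2_int_mul (hf.sub (memLp_const _)) (hg.sub (memLp_const _))

lemma cov_add_add {Ω : Type} [MeasurableSpace Ω] (μ : Measure Ω) [IsProbabilityMeasure μ]
    {X1 X2 Y1 Y2 : Ω → ℝ} (hX1 : MemLp X1 2 μ) (hX2 : MemLp X2 2 μ)
    (hY1 : MemLp Y1 2 μ) (hY2 : MemLp Y2 2 μ) :
    cov μ (fun ω => X1 ω + X2 ω) (fun ω => Y1 ω + Y2 ω)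
      = cov μ X1 Y1 + cov μ X1 Y2 + cov μ X2 Y1 + cov μ X2 Y2 := by
  have iX1 : Integrable X1 μ := hX1.integrable one_le_two
  have iX2 : Integrable X2 μ := hX2.integrable one_le_two
  have iY1 : Integrable Y1 μ := hY1.integrable one_le_two
  have iY2 : Integrable Y2 μ := hY2.integrable one_le_two
  unfold cov
  rw [integral_add iX1 iX2, integral_add iY1 iY2]
  have hpt : ∀ ω : Ω,
      (X1 ω + X2 ω - ((∫ ω', X1 ω' ∂μ) + ∫ ω', X2 ω' ∂μ)) *
        (Y1 ω + Y2 ω - ((∫ ω', Y1 ω' ∂μ) + ∫ ω', Y2 ω' ∂μ))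
      = (X1 ω - ∫ ω', X1 ω' ∂μ) * (Y1 ω - ∫ ω', Y1 ω' ∂μ)
        + ((X1 ω - ∫ ω', X1 ω' ∂μ) * (Y2 ω - ∫ ω', Y2 ω' ∂μ)
        + ((X2 ω - ∫ ω', X2 ω' ∂μ) * (Y1 ω - ∫ ω', Y1 ω' ∂μ)
        + (X2 ω - ∫ ω', X2 ω' ∂μ) * (Y2 ω - ∫ ω', Y2 ω' ∂μ))) := by
    intro ω; ring
  simp_rw [hpt]
  have A := centered_int_mul hX1 hY1
  have Bi := centered_int_mul hX1 hY2
  have C := centered_int_mul hX2 hY1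
  have D := centered_int_mul hX2 hY2
  have hCD : Integrable (fun ω => (X2 ω - ∫ ω', X2 ω' ∂μ) * (Y1 ω - ∫ ω', Y1 ω' ∂μ)
      + (X2 ω - ∫ ω', X2 ω' ∂μ) * (Y2 ω - ∫ ω', Y2 ω' ∂μ)) μ := C.add D
  have hBCD : Integrable (fun ω => (X1 ω - ∫ ω', X1 ω' ∂μ) * (Y2 ω - ∫ ω', Y2 ω' ∂μ)
      + ((X2 ω - ∫ ω', X2 ω' ∂μ) * (Y1 ω - ∫ ω', Y1 ω' ∂μ)
      + (X2 ω - ∫ ω', X2 ω' ∂μ) * (Y2 ω - ∫ ω', Y2 ω' ∂μ))) μ := Bi.add hCD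
  rw [integral_add A hBCD, integral_add Bi hCD, integral_add C D]
  ring

/-- Lag-one covariance of closing-time returns in the Brownian model:
`Cov(Xⁱ_{t+1}, Xʲₜ) = (xⱼ - xᵢ)σᵢⱼ` if `xⱼ > xᵢ`, else `0`; and all lags `k ≥ 2` vanish. -/
theorem closing_time_lag_one_covariance
    {Ω : Type} [MeasurableSpace Ω] (μ : Measure Ω) [IsProbabilityMeasure μ] {n : ℕ}
    (B : ℝ → Ω → Fin n → ℝ) (S : Matrix (Fin n) (Fin n) ℝ) (x : Fin n → ℝ)
    (hx0 : ∀ i, 0 ≤ x i) (hx1 : ∀ i, x i ≤ 1)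
    (hmono : ∀ i j : Fin n, i ≤ j → x i ≤ x j)
    (hL2 : ∀ (t : ℝ) (i : Fin n), MemLp (fun ω => B t ω i) 2 μ)
    (hsame : ∀ s t : ℝ, s ≤ t → ∀ i j : Fin n,
      cov μ (fun ω => B t ω i - B s ω i) (fun ω => B t ω j - B s ω j) = (t - s) * S i j)
    (hdisj : ∀ a b c d : ℝ, a ≤ b → b ≤ c → c ≤ d → ∀ i j : Fin n,
      cov μ (fun ω => B b ω i - B a ω i) (fun ω => B d ω j - B c ω j) = 0 ∧
      cov μ (fun ω => B d ω i - B c ω i) (fun ω => B b ω j - B a ω j) = 0) :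
    ∀ (t : ℤ) (i j : Fin n),
      (cov μ (fun ω => B ((t : ℝ) + 1 + x i) ω i - B ((t : ℝ) + x i) ω i)
             (fun ω => B ((t : ℝ) + x j) ω j - B ((t : ℝ) - 1 + x j) ω j)
         = if x i < x j then (x j - x i) * S i j else 0) ∧
      (∀ k : ℤ, 2 ≤ k →
        cov μ (fun ω => B ((t : ℝ) + (k : ℝ) + x i) ω i - B ((t : ℝ) + (k : ℝ) - 1 + x i) ω i)
              (fun ω => B ((t : ℝ) + x j) ω j - B ((t : ℝ) - 1 + x j) ω j)
          = 0) := by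
  intro t i j
  have hxi0 := hx0 i
  have hxj0 := hx0 j
  have hxi1 := hx1 i
  have hxj1 := hx1 j
  constructor
  · by_cases h : x i < x j
    · rw [if_pos h]
      -- split both increments at the overlap endpoints
      have e1 : (fun ω => B ((t : ℝ) + 1 + x i) ω i - B ((t : ℝ) + x i) ω i)
          = (fun ω => (B ((t : ℝ) + 1 + x i) ω i - B ((t : ℝ) + x j) ω i)
              + (B ((t : ℝ) + x j) ω i - B ((t : ℝ) + x i) ω i)) := by
        funext ω; ring
      have e2 : (fun ω => B ((t : ℝ) + x j) ω j - B ((t : ℝ) - 1 + x j) ω j)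
          = (fun ω => (B ((t : ℝ) + x j) ω j - B ((t : ℝ) + x i) ω j)
              + (B ((t : ℝ) + x i) ω j - B ((t : ℝ) - 1 + x j) ω j)) := by
        funext ω; ring
      rw [e1, e2]
      have hA1 : MemLp (fun ω => B ((t : ℝ) + 1 + x i) ω i - B ((t : ℝ) + x j) ω i) 2 μ :=
        (hL2 _ i).sub (hL2 _ i)
      have hA2 : MemLp (fun ω => B ((t : ℝ) + x j) ω i - B ((t : ℝ) + x i) ω i) 2 μ :=
        (hL2 _ i).sub (hL2 _ i)
      have hC1 : MemLp (fun ω => B ((t : ℝ) + x j) ω j - B ((t : ℝ) + x i) ω j) 2 μ :=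
        (hL2 _ j).sub (hL2 _ j)
      have hC2 : MemLp (fun ω => B ((t : ℝ) + x i) ω j - B ((t : ℝ) - 1 + x j) ω j) 2 μ :=
        (hL2 _ j).sub (hL2 _ j)
      rw [cov_add_add μ hA1 hA2 hC1 hC2]
      have h11 := (hdisj ((t : ℝ) + x i) ((t : ℝ) + x j) ((t : ℝ) + x j) ((t : ℝ) + 1 + x i)
        (by linarith) le_rfl (by linarith) i j).2
      have h12 := (hdisj ((t : ℝ) - 1 + x j) ((t : ℝ) + x i) ((t : ℝ) + x j) ((t : ℝ) + 1 + x i)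
        (by linarith) (by linarith) (by linarith) i j).2
      have h21 := hsame ((t : ℝ) + x i) ((t : ℝ) + x j) (by linarith) i j
      have h22 := (hdisj ((t : ℝ) - 1 + x j) ((t : ℝ) + x i) ((t : ℝ) + x i) ((t : ℝ) + x j)
        (by linarith) le_rfl (by linarith) i j).2
      rw [h11, h12, h21, h22]
      ring
    · rw [if_neg h]
      push_neg at h
      exact (hdisj ((t : ℝ) - 1 + x j) ((t : ℝ) + x j) ((t : ℝ) + x i) ((t : ℝ) + 1 + x i)
        (by linarith) (by linarith) (by linarith) i j).2
  · intro k hk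
    have hk2 : (2 : ℝ) ≤ (k : ℝ) := by exact_mod_cast hk
    exact (hdisj ((t : ℝ) - 1 + x j) ((t : ℝ) + x j) ((t : ℝ) + (k : ℝ) - 1 + x i)
      ((t : ℝ) + (k : ℝ) + x i) (by linarith) (by linarith) (by linarith) i j).2
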